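/- The class Wide_nar of inclusions widened at a narrow set of vertices is contained in the saturated closure of the class Wide_nar^(1) of inclusions widened at a single narrow vertex. -/

import Mathlib

open CategoryTheory Simplicial Opposite Limits

namespace Paper

/-! ## The simplicial set `J`, nerve of the free-living isomorphism -/

/-- The simplicial set `J`, the nerve of the free-living isomorphism `𝕀`:
its `n`-simplices are the tuples `{0,1}^(n+1)` (recorded as `Bool`-valued functions,
`false` being the vertex `0` and `true` the vertex `1`), with all simplicial
operators acting by reindexing. -/
def J : SSet.{0} where
  obj m := Fin (m.unop.len + 1) → Bool
  map f := TypeCat.ofHom fun a => a ∘ f.unop.toOrderHom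
  map_id _ := rfl
  map_comp _ _ := rfl

/-- The two vertices `0, 1 : Δ[0] ⟶ J` of `J`; `ptJ false` is the vertex `0` and
`ptJ true` is the vertex `1`. -/
def ptJ (b : Bool) : Δ[0] ⟶ J where
  app _ := TypeCat.ofHom fun _ _ => b
  naturality _ _ _ := rfl

/-- The boundary `∂J = {0} ∪ {1}` of `J` (two discrete points). -/
def bJ : SSet.{0} where
  obj _ := Bool
  map _ := TypeCat.ofHom fun b => b
  map_id _ := rfl
  map_comp _ _ := rfl

/-- The inclusion `∂J ↪ J`. -/
def bJIncl : bJ ⟶ J where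
  app _ := TypeCat.ofHom fun b _ => b
  naturality _ _ _ := rfl

/-! ## Binary products and pushout-products -/

/-- The (pointwise) product of two simplicial sets. -/
def sprod (X Y : SSet.{0}) : SSet.{0} where
  obj m := X.obj m × Y.obj m
  map f := TypeCat.ofHom fun p => (X.map f p.1, Y.map f p.2)
  map_id m := by
    ext p
    · exact FunctorToTypes.map_id_apply X p.1
    · exact FunctorToTypes.map_id_apply Y p.2
  map_comp f g := by
    ext p
    · exact FunctorToTypes.map_comp_apply X f g p.1
    · exact FunctorToTypes.map_comp_apply Y f g p.2

/-- The product of two morphisms of simplicial sets. -/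
def sprodMap {X X' Y Y' : SSet.{0}} (f : X ⟶ X') (g : Y ⟶ Y') : sprod X Y ⟶ sprod X' Y' where
  app m := TypeCat.ofHom fun p => (f.app m p.1, g.app m p.2)
  naturality m m' φ := by
    ext p
    refine @Prod.ext (X'.obj m') (Y'.obj m') _ _ ?_ ?_
    · exact ConcreteCategory.congr_hom (f.naturality φ) p.1
    · exact ConcreteCategory.congr_hom (g.naturality φ) p.2

/-- The pushout-product `f □ g : (A × Z) ∪ (B × W) ⟶ B × Z` of `f : A ⟶ B` and
`g : W ⟶ Z`, the domain being presented as the pushout `(A × Z) ∪_{A × W} (B × W)`. -/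
noncomputable def pp {A B W Z : SSet.{0}} (f : A ⟶ B) (g : W ⟶ Z) :
    pushout (sprodMap (𝟙 A) g) (sprodMap f (𝟙 W)) ⟶ sprod B Z :=
  pushout.desc (sprodMap f (𝟙 Z)) (sprodMap (𝟙 B) g) rfl

/-! ## Saturated classes of morphisms -/

/-- A class of morphisms is stable under retracts if, whenever `f` is a retract of `g`
in the arrow category, membership of `g` implies membership of `f`. -/
def StableUnderRetracts (T : MorphismProperty SSet.{0}) : Prop :=
  ∀ ⦃X Y X' Y' : SSet.{0}⦄ (f : X ⟶ Y) (g : X' ⟶ Y')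
    (i : Arrow.mk f ⟶ Arrow.mk g) (r : Arrow.mk g ⟶ Arrow.mk f),
    i ≫ r = 𝟙 _ → T g → T f

/-- The inclusion functor `Set.Iio i ⥤ ι`. -/
def iioFunctor {ι : Type} [Preorder ι] (i : ι) : Set.Iio i ⥤ ι :=
  Monotone.functor (f := Subtype.val) (fun _ _ h => h)

/-- The cocone on the restriction of `F : ι ⥤ SSet` to `Set.Iio i` with apex `F.obj i`. -/
def restrictionCocone {ι : Type} [Preorder ι] (F : ι ⥤ SSet.{0}) (i : ι) :
    Cocone (iioFunctor i ⋙ F) where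
  pt := F.obj i
  ι :=
    { app := fun j => F.map (homOfLE j.2.le)
      naturality := fun j k h => by
        dsimp [iioFunctor]
        rw [← F.map_comp, Category.comp_id]
        congr 1 }

/-- A class of morphisms is stable under transfinite composition if, for every
well-ordered type `ι` and every functor `F : ι ⥤ SSet` which is continuous at limit
stages and whose successor maps `F.obj i ⟶ F.obj (i+1)` all belong to the class, and
every colimit cocone `c` on `F`, the transfinite composite `F.obj ⊥ ⟶ c.pt` belongs to
the class. -/
def StableUnderTransfiniteComposition (T : MorphismProperty SSet.{0}) : Prop :=
  ∀ (ι : Type) [LinearOrder ι] [SuccOrder ι] [OrderBot ι] [WellFoundedLT ι]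
    (F : ι ⥤ SSet.{0}),
    (∀ i : ι, ¬IsMax i → T (F.map (homOfLE (Order.le_succ i)))) →
    (∀ i : ι, Order.IsSuccLimit i → Nonempty (IsColimit (restrictionCocone F i))) →
    ∀ (c : Cocone F), IsColimit c → T (c.ι.app ⊥)

/-- A class of morphisms of simplicial sets is saturated if it is closed under
isomorphisms, pushouts, transfinite compositions, and retracts. -/
structure IsSaturated (T : MorphismProperty SSet.{0}) : Prop where
  respectsIso : T.RespectsIso
  stableUnderCobaseChange : T.IsStableUnderCobaseChange
  stableUnderRetracts : StableUnderRetracts T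
  stableUnderTransfiniteComposition : StableUnderTransfiniteComposition T

/-- The saturated closure of a class of morphisms: the smallest saturated class
containing it. -/
def satClosure (S : MorphismProperty SSet.{0}) : MorphismProperty SSet.{0} :=
  fun _ _ f => ∀ T : MorphismProperty SSet.{0}, IsSaturated T → S ≤ T → T f

/-! ## Subcomplexes -/

/-- A subcomplex of a simplicial set. -/
structure Sub (X : SSet.{0}) where
  carrier : ∀ m, Set (X.obj m)
  map_mem : ∀ ⦃m m' : SimplexCategoryᵒᵖ⦄ (f : m ⟶ m') ⦃σ : X.obj m⦄,
    σ ∈ carrier m → X.map f σ ∈ carrier m'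

/-- The simplicial set underlying a subcomplex. -/
def Sub.toSSet {X : SSet.{0}} (S : Sub X) : SSet.{0} where
  obj m := S.carrier m
  map f := TypeCat.ofHom fun σ => ⟨X.map f σ.1, S.map_mem f σ.2⟩
  map_id m := by
    ext σ
    exact FunctorToTypes.map_id_apply X σ.1
  map_comp f g := by
    ext σ
    exact FunctorToTypes.map_comp_apply X f g σ.1

/-- The inclusion of a subcomplex. -/
def Sub.ι {X : SSet.{0}} (S : Sub X) : S.toSSet ⟶ X where
  app _ := TypeCat.ofHom fun σ => σ.1
  naturality _ _ _ := rfl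

/-- Containment of subcomplexes. -/
def Sub.Le {X : SSet.{0}} (S T : Sub X) : Prop := ∀ m, S.carrier m ⊆ T.carrier m

/-- The inclusion map associated to a containment of subcomplexes. -/
def Sub.homOfLe {X : SSet.{0}} {S T : Sub X} (h : S.Le T) : S.toSSet ⟶ T.toSSet where
  app m := TypeCat.ofHom fun σ => ⟨σ.1, h m σ.2⟩
  naturality _ _ _ := rfl

/-- The union of two subcomplexes. -/
def Sub.union {X : SSet.{0}} (S T : Sub X) : Sub X where
  carrier m := S.carrier m ∪ T.carrier m
  map_mem _ _ f _ h := h.imp (fun hs => S.map_mem f hs) (fun ht => T.map_mem f ht)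

/-- The intersection of two subcomplexes. -/
def Sub.inter {X : SSet.{0}} (S T : Sub X) : Sub X where
  carrier m := S.carrier m ∩ T.carrier m
  map_mem _ _ f _ h := ⟨S.map_mem f h.1, T.map_mem f h.2⟩

/-- A subcomplex `S` of `X`, viewed as a subcomplex of (the simplicial set underlying)
another subcomplex `T` of `X`. -/
def Sub.restrict {X : SSet.{0}} (T S : Sub X) : Sub T.toSSet where
  carrier m := {σ | σ.1 ∈ S.carrier m}
  map_mem _ _ f _ h := S.map_mem f h

/-- The (dimension zero) object of `SimplexCategoryᵒᵖ` indexing vertices. -/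
abbrev V0 : SimplexCategoryᵒᵖ := Opposite.op (SimplexCategory.mk 0)

/-- The full subcomplex of `X` on a set `ν` of vertices: the simplices all of whose
vertices lie in `ν`. -/
def fullSub (X : SSet.{0}) (ν : Set (X.obj V0)) : Sub X where
  carrier m := {σ | ∀ g : SimplexCategory.mk 0 ⟶ m.unop, X.map g.op σ ∈ ν}
  map_mem := by
    intro m m' f σ hσ g
    rw [← FunctorToTypes.map_comp_apply]
    exact hσ (g ≫ f.unop)

/-! ## Widenings and widened inclusions -/

/-- The widening `W_ν(X)` of `X` at a set `ν` of vertices: the full subcomplex of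
`J × X` on the vertex set `({0} × X₀) ∪ ({1} × ν)`. -/
def wideSub (X : SSet.{0}) (ν : Set (X.obj V0)) : Sub (sprod J X) :=
  fullSub (sprod J X) {p | p.1 0 = true → p.2 ∈ ν}

/-- The subcomplex `{0} × X` of `J × X` (the full subcomplex on the vertices
`{0} × X₀`). -/
def zeroSlice (X : SSet.{0}) : Sub (sprod J X) :=
  fullSub (sprod J X) {p | p.1 0 = false}

/-- For `A` a subcomplex of `Y`, the subcomplex `J × A` of `J × Y`. -/
def Sub.prodJ {Y : SSet.{0}} (A : Sub Y) : Sub (sprod J Y) where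
  carrier m := {p | p.2 ∈ A.carrier m}
  map_mem _ _ f _ h := A.map_mem f h

/-- Given a subcomplex (inclusion) `A = X ⊆ Y` and a set `ν` of vertices of `Y`, the
subcomplex `({0} × Y) ∪ W_{ν ∩ X₀}(X)` of `J × Y`: the domain of the inclusion
`X ↪ Y` widened at `ν`. -/
def widenedSub (Y : SSet.{0}) (A : Sub Y) (ν : Set (Y.obj V0)) : Sub (sprod J Y) :=
  (zeroSlice Y).union ((wideSub Y (ν ∩ A.carrier V0)).inter A.prodJ)

lemma zeroSlice_le_wideSub (Y : SSet.{0}) (ν : Set (Y.obj V0)) :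
    (zeroSlice Y).Le (wideSub Y ν) := by
  intro m σ hσ g h
  exact absurd (hσ g) (by simp [h])

lemma wideSub_mono (Y : SSet.{0}) {ν ν' : Set (Y.obj V0)} (h : ν ⊆ ν') :
    (wideSub Y ν).Le (wideSub Y ν') :=
  fun _ σ hσ g ht => h (hσ g ht)

lemma widenedSub_le (Y : SSet.{0}) (A : Sub Y) (ν : Set (Y.obj V0)) :
    (widenedSub Y A ν).Le (wideSub Y ν) := by
  refine fun m σ hσ => Or.elim hσ (fun h => ?_) (fun h => ?_)
  · exact zeroSlice_le_wideSub Y ν m h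
  · exact wideSub_mono Y Set.inter_subset_left m h.1

/-- The inclusion `X ↪ Y` widened at `ν`: the inclusion
`({0} × Y) ∪ W_{ν ∩ X₀}(X) ↪ W_ν(Y)`. -/
def widenedIncl (Y : SSet.{0}) (A : Sub Y) (ν : Set (Y.obj V0)) :
    (widenedSub Y A ν).toSSet ⟶ (wideSub Y ν).toSSet :=
  Sub.homOfLe (widenedSub_le Y A ν)

/-- `Wide`: the class of all widened inclusions. -/
def Wide : MorphismProperty SSet.{0} := fun _ _ h =>
  ∃ (Y : SSet.{0}) (A : Sub Y) (ν : Set (Y.obj V0)),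
    Arrow.mk h = Arrow.mk (widenedIncl Y A ν)

/-- `Wide^(1)`: the class of inclusions widened at a single vertex. -/
def Wide1 : MorphismProperty SSet.{0} := fun _ _ h =>
  ∃ (Y : SSet.{0}) (A : Sub Y) (v : Y.obj V0),
    Arrow.mk h = Arrow.mk (widenedIncl Y A {v})

/-! ## Narrow vertices -/

/-- A vertex `v` of `Y` is narrow if every simplex of `Y` has at most one vertex equal
to `v`. -/
def Narrow (Y : SSet.{0}) (v : Y.obj V0) : Prop :=
  ∀ ⦃m : SimplexCategoryᵒᵖ⦄ (σ : Y.obj m) (g g' : SimplexCategory.mk 0 ⟶ m.unop),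
    Y.map g.op σ = v → Y.map g'.op σ = v → g = g'

/-- `Wide_nar`: the class of inclusions widened at a narrow set of vertices. -/
def WideNar : MorphismProperty SSet.{0} := fun _ _ h =>
  ∃ (Y : SSet.{0}) (A : Sub Y) (ν : Set (Y.obj V0)),
    (∀ v ∈ ν, Narrow Y v) ∧ Arrow.mk h = Arrow.mk (widenedIncl Y A ν)

/-- `Wide_nar^(1)`: the class of inclusions widened at a single narrow vertex. -/
def WideNar1 : MorphismProperty SSet.{0} := fun _ _ h =>
  ∃ (Y : SSet.{0}) (A : Sub Y) (v : Y.obj V0),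
    Narrow Y v ∧ Arrow.mk h = Arrow.mk (widenedIncl Y A {v})

/-! ## Standard simplices, boundaries, skeleta, iso-horns -/

/-- The unique map to the terminal simplicial set `Δ[0]`. -/
def toPt (X : SSet.{0}) : X ⟶ Δ[0] where
  app m := TypeCat.ofHom fun _ => SSet.stdSimplex.const 0 0 m
  naturality m m' f := by
    ext x
    apply SSet.stdSimplex.objEquiv.injective
    apply SimplexCategory.Hom.ext
    apply OrderHom.ext
    funext j
    exact Subsingleton.elim (α := Fin 1) _ _

/-- The `i`-th vertex of the standard simplex `Δ[n]`. -/
def vrt (n : ℕ) (i : Fin (n + 1)) : Δ[n].obj V0 :=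
  SSet.stdSimplex.const n i V0

/-- The boundary `∂Δ[n]`, as a subcomplex of `Δ[n]`: the simplices which are not
surjective as monotone maps. -/
def bSub (n : ℕ) : Sub Δ[n] where
  carrier m := {σ | ¬Function.Surjective (SSet.stdSimplex.asOrderHom σ)}
  map_mem _ _ f σ hσ h := hσ (Function.Surjective.of_comp h)

/-- The `k`-skeleton of `Y`, as a subcomplex: the simplices which factor through some
simplex of dimension at most `k`. -/
def skSub (Y : SSet.{0}) (k : ℕ) : Sub Y where
  carrier m := {σ | ∃ (j : ℕ) (_ : j ≤ k) (f : m.unop ⟶ SimplexCategory.mk j)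
    (τ : Y.obj (Opposite.op (SimplexCategory.mk j))), Y.map f.op τ = σ}
  map_mem := by
    rintro m m' φ σ ⟨j, hj, f, τ, rfl⟩
    exact ⟨j, hj, φ.unop ≫ f, τ, by rw [← FunctorToTypes.map_comp_apply]; rfl⟩

/-- A `k`-simplex is nondegenerate if it admits no factorization through a simplex of
strictly smaller dimension. -/
def Nondegenerate (Y : SSet.{0}) {k : ℕ} (σ : Y.obj (Opposite.op (SimplexCategory.mk k))) :
    Prop :=
  ∀ (j : ℕ) (f : SimplexCategory.mk k ⟶ SimplexCategory.mk j)
    (τ : Y.obj (Opposite.op (SimplexCategory.mk j))), Y.map f.op τ = σ → k ≤ j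

/-- The iso-horn inclusion `𝕍_i[m+1] ↪ ∇̄_i[m+1]`: the boundary inclusion
`∂Δ[m] ↪ Δ[m]` widened at the single vertex `i`, i.e. the inclusion
`({0} × Δ[m]) ∪ W_i(∂Δ[m]) ↪ W_i(Δ[m])` of the iso-horn into the isoplex. -/
def isoHornIncl (m : ℕ) (i : Fin (m + 1)) :
    (widenedSub Δ[m] (bSub m) {vrt m i}).toSSet ⟶ (wideSub Δ[m] {vrt m i}).toSSet :=
  widenedIncl Δ[m] (bSub m) {vrt m i}

/-- `IsoHorn`: the class of all iso-horn inclusions. -/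
def IsoHorn : MorphismProperty SSet.{0} := fun _ _ h =>
  ∃ (m : ℕ) (i : Fin (m + 1)), Arrow.mk h = Arrow.mk (isoHornIncl m i)

/-! ## The classes `({0} ↪ J) □ Bdry` and `({0} ↪ J) □ Mono` -/

/-- The class `({0} ↪ J) □ Bdry` of pushout-products of the vertex `0 : Δ[0] ⟶ J`
with the boundary inclusions `∂Δ[n] ↪ Δ[n]`. -/
def ppJ0Bdry : MorphismProperty SSet.{0} := fun _ _ h =>
  ∃ n : ℕ, Arrow.mk h = Arrow.mk (pp (ptJ false) (SSet.boundary n).ι)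

/-- The class `({0} ↪ J) □ Mono` of pushout-products of the vertex `0 : Δ[0] ⟶ J`
with all monomorphisms of simplicial sets. -/
def ppJ0Mono : MorphismProperty SSet.{0} := fun _ _ h =>
  ∃ (W Z : SSet.{0}) (g : W ⟶ Z), Mono g ∧ Arrow.mk h = Arrow.mk (pp (ptJ false) g)


/-! ## Auxiliary development for Statement 11 -/

section Aux

/-- The `i`-th vertex map. -/
def vtx {m : SimplexCategoryᵒᵖ} (i : Fin (m.unop.len + 1)) : m ⟶ V0 :=
  (SimplexCategory.const (SimplexCategory.mk 0) m.unop i).op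

lemma vtx_comp {X : SSet.{0}} {m m' : SimplexCategoryᵒᵖ} (f : m ⟶ m')
    (i : Fin (m'.unop.len + 1)) (σ : X.obj m) :
    X.map (vtx i) (X.map f σ) = X.map (vtx (f.unop.toOrderHom i)) σ := by
  rw [← FunctorToTypes.map_comp_apply]
  congr 1

lemma mem_fullSub_iff (X : SSet.{0}) (s : Set (X.obj V0)) {m : SimplexCategoryᵒᵖ}
    (p : X.obj m) :
    p ∈ (fullSub X s).carrier m ↔ ∀ i : Fin (m.unop.len + 1), X.map (vtx i) p ∈ s := by
  constructor
  · intro h i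
    exact h _
  · intro h g
    have hg : g = SimplexCategory.const _ m.unop (g.toOrderHom 0) :=
      SimplexCategory.eq_const_of_zero g
    rw [hg]
    exact h _

lemma mem_wideSub_iff (X : SSet.{0}) (s : Set (X.obj V0)) {m : SimplexCategoryᵒᵖ}
    (p : (sprod J X).obj m) :
    p ∈ (wideSub X s).carrier m ↔ ∀ i : Fin (m.unop.len + 1),
      p.1 i = true → X.map (vtx i) p.2 ∈ s :=
  mem_fullSub_iff (sprod J X) _ p

lemma mem_zeroSlice_iff (X : SSet.{0}) {m : SimplexCategoryᵒᵖ}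
    (p : (sprod J X).obj m) :
    p ∈ (zeroSlice X).carrier m ↔ ∀ i : Fin (m.unop.len + 1), p.1 i = false :=
  mem_fullSub_iff (sprod J X) _ p

theorem Sub.ext' {X : SSet.{0}} {S T : Sub X} (h : S.carrier = T.carrier) : S = T := by
  cases S; cases T; cases h; rfl

lemma Sub.le_refl' {X : SSet.{0}} (S : Sub X) : S.Le S := fun _ _ h => h

lemma Sub.homOfLe_comp' {X : SSet.{0}} {S T U : Sub X} (h : S.Le T) (h' : T.Le U) :
    Sub.homOfLe h ≫ Sub.homOfLe h' = Sub.homOfLe (fun m => (h m).trans (h' m)) := rfl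

/-- Mutually contained subcomplexes have isomorphic underlying simplicial sets. -/
def Sub.isoOfLe {X : SSet.{0}} {S T : Sub X} (h : S.Le T) (h' : T.Le S) :
    S.toSSet ≅ T.toSSet where
  hom := Sub.homOfLe h
  inv := Sub.homOfLe h'
  hom_inv_id := rfl
  inv_hom_id := rfl

theorem Sub.isIso_homOfLe {X : SSet.{0}} {S T : Sub X} (h : S.Le T) (h' : T.Le S) :
    IsIso (Sub.homOfLe h) :=
  ⟨Sub.homOfLe h', rfl, rfl⟩

end Aux


section UnionPushout

variable {Z : SSet.{0}} (S T : Sub Z)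

lemma Sub.inter_le_left : (S.inter T).Le S := fun _ _ h => h.1
lemma Sub.inter_le_right : (S.inter T).Le T := fun _ _ h => h.2
lemma Sub.left_le_union : S.Le (S.union T) := fun _ _ h => Or.inl h
lemma Sub.right_le_union : T.Le (S.union T) := fun _ _ h => Or.inr h

open Classical in
/-- The underlying function of `unionDesc`. -/
noncomputable def unionDescApp {W : SSet.{0}} (p : S.toSSet ⟶ W) (q : T.toSSet ⟶ W)
    (compat : ∀ (m : SimplexCategoryᵒᵖ) (x : Z.obj m) (hS : x ∈ S.carrier m)
      (hT : x ∈ T.carrier m), p.app m ⟨x, hS⟩ = q.app m ⟨x, hT⟩)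
    (m : SimplexCategoryᵒᵖ) (σ : (S.union T).toSSet.obj m) : W.obj m :=
  if h : σ.1 ∈ S.carrier m then p.app m ⟨σ.1, h⟩
  else q.app m ⟨σ.1, σ.2.resolve_left h⟩

lemma unionDescApp_left {W : SSet.{0}} (p : S.toSSet ⟶ W) (q : T.toSSet ⟶ W) (compat)
    (m : SimplexCategoryᵒᵖ) (x : Z.obj m) (hS : x ∈ S.carrier m) (hU) :
    unionDescApp S T p q compat m ⟨x, hU⟩ = p.app m ⟨x, hS⟩ := by
  classical
  dsimp only [unionDescApp]
  rw [dif_pos hS]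

lemma unionDescApp_right {W : SSet.{0}} (p : S.toSSet ⟶ W) (q : T.toSSet ⟶ W) (compat)
    (m : SimplexCategoryᵒᵖ) (x : Z.obj m) (hT : x ∈ T.carrier m) (hU) :
    unionDescApp S T p q compat m ⟨x, hU⟩ = q.app m ⟨x, hT⟩ := by
  classical
  dsimp only [unionDescApp]
  by_cases h : x ∈ S.carrier m
  · rw [dif_pos h]
    exact compat m x h hT
  · rw [dif_neg h]

/-- Glue morphisms on two subcomplexes agreeing on the intersection. -/
noncomputable def unionDesc {W : SSet.{0}} (p : S.toSSet ⟶ W) (q : T.toSSet ⟶ W)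
    (compat : ∀ (m : SimplexCategoryᵒᵖ) (x : Z.obj m) (hS : x ∈ S.carrier m)
      (hT : x ∈ T.carrier m), p.app m ⟨x, hS⟩ = q.app m ⟨x, hT⟩) :
    (S.union T).toSSet ⟶ W where
  app m := TypeCat.ofHom (unionDescApp S T p q compat m)
  naturality m m' f := by
    ext σ
    obtain ⟨x, hU⟩ := σ
    show unionDescApp S T p q compat m' ((S.union T).toSSet.map f ⟨x, hU⟩)
      = W.map f (unionDescApp S T p q compat m ⟨x, hU⟩)
    by_cases hS : x ∈ S.carrier m
    · exact (unionDescApp_left S T p q compat m' (Z.map f x) (S.map_mem f hS) _).trans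
        ((ConcreteCategory.congr_hom (p.naturality f) ⟨x, hS⟩).trans
          (congrArg (W.map f) (unionDescApp_left S T p q compat m x hS _).symm))
    · have hT : x ∈ T.carrier m := hU.resolve_left hS
      exact (unionDescApp_right S T p q compat m' (Z.map f x) (T.map_mem f hT) _).trans
        ((ConcreteCategory.congr_hom (q.naturality f) ⟨x, hT⟩).trans
          (congrArg (W.map f) (unionDescApp_right S T p q compat m x hT _).symm))

lemma unionDesc_left {W : SSet.{0}} (p : S.toSSet ⟶ W) (q : T.toSSet ⟶ W) (compat)
    (m : SimplexCategoryᵒᵖ) (x : Z.obj m) (hS : x ∈ S.carrier m) (hU) :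
    (unionDesc S T p q compat).app m ⟨x, hU⟩ = p.app m ⟨x, hS⟩ :=
  unionDescApp_left S T p q compat m x hS hU

lemma unionDesc_right {W : SSet.{0}} (p : S.toSSet ⟶ W) (q : T.toSSet ⟶ W) (compat)
    (m : SimplexCategoryᵒᵖ) (x : Z.obj m) (hT : x ∈ T.carrier m) (hU) :
    (unionDesc S T p q compat).app m ⟨x, hU⟩ = q.app m ⟨x, hT⟩ :=
  unionDescApp_right S T p q compat m x hT hU

lemma union_isPushout :
    IsPushout (Sub.homOfLe (Sub.inter_le_left S T)) (Sub.homOfLe (Sub.inter_le_right S T))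
      (Sub.homOfLe (Sub.left_le_union S T)) (Sub.homOfLe (Sub.right_le_union S T)) := by
  classical
  have w : CommSq (Sub.homOfLe (Sub.inter_le_left S T))
      (Sub.homOfLe (Sub.inter_le_right S T))
      (Sub.homOfLe (Sub.left_le_union S T)) (Sub.homOfLe (Sub.right_le_union S T)) := ⟨rfl⟩
  have compat : ∀ (s : PushoutCocone (Sub.homOfLe (Sub.inter_le_left S T))
      (Sub.homOfLe (Sub.inter_le_right S T)))
      (m : SimplexCategoryᵒᵖ) (x : Z.obj m) (hS : x ∈ S.carrier m)
      (hT : x ∈ T.carrier m), s.inl.app m ⟨x, hS⟩ = s.inr.app m ⟨x, hT⟩ := by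
    intro s m x hS hT
    exact ConcreteCategory.congr_hom (NatTrans.congr_app s.condition m) ⟨x, hS, hT⟩
  refine IsPushout.of_isColimit' w (PushoutCocone.IsColimit.mk _
    (fun s => unionDesc S T s.inl s.inr (compat s)) ?_ ?_ ?_)
  · intro s
    apply NatTrans.ext
    funext m
    ext σ
    exact unionDesc_left S T s.inl s.inr (compat s) m σ.1 σ.2 _
  · intro s
    apply NatTrans.ext
    funext m
    ext σ
    exact unionDesc_right S T s.inl s.inr (compat s) m σ.1 σ.2 _
  · intro s mm hl hr
    apply NatTrans.ext
    funext m
    ext σ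
    rcases σ.2 with h | h
    · have h0 : σ = (Sub.homOfLe (Sub.left_le_union S T)).app m ⟨σ.1, h⟩ := rfl
      rw [h0]
      exact (ConcreteCategory.congr_hom (NatTrans.congr_app hl m) ⟨σ.1, h⟩).trans
        (unionDesc_left S T s.inl s.inr (compat s) m σ.1 h _).symm
    · have h0 : σ = (Sub.homOfLe (Sub.right_le_union S T)).app m ⟨σ.1, h⟩ := rfl
      rw [h0]
      exact (ConcreteCategory.congr_hom (NatTrans.congr_app hr m) ⟨σ.1, h⟩).trans
        (unionDesc_right S T s.inl s.inr (compat s) m σ.1 h _).symm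

end UnionPushout


section Chains

variable {Z : SSet.{0}}

/-- The chain of subcomplexes as a functor. -/
def subChain {ι : Type} [Preorder ι] (X : ι → Sub Z)
    (hX : ∀ ⦃i j : ι⦄, i ≤ j → (X i).Le (X j)) : ι ⥤ SSet.{0} where
  obj i := (X i).toSSet
  map {i j} f := Sub.homOfLe (hX (leOfHom f))
  map_id _ := rfl
  map_comp _ _ := rfl

/-- The cocone on a chain of subcomplexes with apex a larger subcomplex. -/
def subChainCocone {ι : Type} [Preorder ι] (X : ι → Sub Z)
    (hX : ∀ ⦃i j : ι⦄, i ≤ j → (X i).Le (X j)) (S : Sub Z) (hle : ∀ i, (X i).Le S) :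
    Cocone (subChain X hX) where
  pt := S.toSSet
  ι :=
    { app := fun i => Sub.homOfLe (hle i)
      naturality := fun i j f => rfl }

/-- If the chain has a top stage containing the apex, the cocone is colimiting. -/
def subChainCoconeIsColimit {ι : Type} [Preorder ι] (X : ι → Sub Z)
    (hX : ∀ ⦃i j : ι⦄, i ≤ j → (X i).Le (X j)) (S : Sub Z) (hle : ∀ i, (X i).Le S)
    (t : ι) (htop : ∀ i, i ≤ t) (hS : S.Le (X t)) :
    IsColimit (subChainCocone X hX S hle) where
  desc s := Sub.homOfLe hS ≫ s.ι.app t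
  fac s i := by
    refine (Category.assoc _ _ _).symm.trans ?_
    have h1 : (subChainCocone X hX S hle).ι.app i ≫ Sub.homOfLe hS
        = (subChain X hX).map (homOfLE (htop i)) := rfl
    rw [h1]
    exact (s.ι.naturality (homOfLE (htop i))).trans (Category.comp_id _)
  uniq s mφ hm := by
    show mφ = Sub.homOfLe hS ≫ s.ι.app t
    rw [← hm t]; refine Eq.trans ?_ (Category.assoc _ _ _)
    have h1 : Sub.homOfLe hS ≫ (subChainCocone X hX S hle).ι.app t = 𝟙 _ := rfl
    erw [h1, Category.id_comp]

lemma chain_key {ι : Type} [LinearOrder ι] (X : ι → Sub Z)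
    (hX : ∀ ⦃i j : ι⦄, i ≤ j → (X i).Le (X j)) (i : ι)
    (s : Cocone (iioFunctor i ⋙ subChain X hX)) (j k : Set.Iio i)
    (m : SimplexCategoryᵒᵖ) (x : Z.obj m) (hj : x ∈ (X j.1).carrier m)
    (hk : x ∈ (X k.1).carrier m) :
    (s.ι.app j).app m ⟨x, hj⟩ = (s.ι.app k).app m ⟨x, hk⟩ := by
  have half : ∀ (j k : Set.Iio i) (hjk : j ≤ k) (x : Z.obj m) (hj : x ∈ (X j.1).carrier m)
      (hk : x ∈ (X k.1).carrier m),
      (s.ι.app j).app m ⟨x, hj⟩ = (s.ι.app k).app m ⟨x, hk⟩ := by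
    intro j k hjk x hj hk
    have := ConcreteCategory.congr_hom (NatTrans.congr_app (s.ι.naturality (homOfLE hjk)) m) ⟨x, hj⟩
    exact this.symm
  rcases le_total j k with h | h
  · exact half j k h x hj hk
  · exact (half k j h x hk hj).symm

/-- The descent function for the restriction cocone. -/
noncomputable def chainDescApp {ι : Type} [LinearOrder ι] (X : ι → Sub Z)
    (hX : ∀ ⦃i j : ι⦄, i ≤ j → (X i).Le (X j)) (i : ι)
    (hcover : ∀ (m : SimplexCategoryᵒᵖ) (σ : Z.obj m), σ ∈ (X i).carrier m →
      ∃ j, j < i ∧ σ ∈ (X j).carrier m)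
    (s : Cocone (iioFunctor i ⋙ subChain X hX)) (m : SimplexCategoryᵒᵖ)
    (σ : (X i).toSSet.obj m) : s.pt.obj m :=
  (s.ι.app ⟨(hcover m σ.1 σ.2).choose, (hcover m σ.1 σ.2).choose_spec.1⟩).app m
    ⟨σ.1, (hcover m σ.1 σ.2).choose_spec.2⟩

lemma chainDescApp_eq {ι : Type} [LinearOrder ι] (X : ι → Sub Z)
    (hX : ∀ ⦃i j : ι⦄, i ≤ j → (X i).Le (X j)) (i : ι) (hcover)
    (s : Cocone (iioFunctor i ⋙ subChain X hX)) (m : SimplexCategoryᵒᵖ)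
    (σ : (X i).toSSet.obj m) (j : Set.Iio i) (hj : σ.1 ∈ (X j.1).carrier m) :
    chainDescApp X hX i hcover s m σ = (s.ι.app j).app m ⟨σ.1, hj⟩ :=
  chain_key X hX i s _ j m σ.1 _ hj

/-- The restriction cocone at a stage which is a union of the previous stages is
colimiting. -/
noncomputable def restrictionIsColimit {ι : Type} [LinearOrder ι] (X : ι → Sub Z)
    (hX : ∀ ⦃i j : ι⦄, i ≤ j → (X i).Le (X j)) (i : ι)
    (hcover : ∀ (m : SimplexCategoryᵒᵖ) (σ : Z.obj m), σ ∈ (X i).carrier m →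
      ∃ j, j < i ∧ σ ∈ (X j).carrier m) :
    IsColimit (restrictionCocone (subChain X hX) i) where
  desc s :=
    { app := fun m => TypeCat.ofHom (chainDescApp X hX i hcover s m)
      naturality := by
        intro m m' f
        ext σ
        obtain ⟨x, hx⟩ := σ
        show chainDescApp X hX i hcover s m' ((X i).toSSet.map f ⟨x, hx⟩)
          = s.pt.map f (chainDescApp X hX i hcover s m ⟨x, hx⟩)
        have hj : (hcover m x hx).choose < i ∧ x ∈ (X (hcover m x hx).choose).carrier m :=
          (hcover m x hx).choose_spec
        rw [chainDescApp_eq X hX i hcover s m' ((X i).toSSet.map f ⟨x, hx⟩)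
            ⟨(hcover m x hx).choose, hj.1⟩ ((X (hcover m x hx).choose).map_mem f hj.2),
          chainDescApp_eq X hX i hcover s m ⟨x, hx⟩ ⟨(hcover m x hx).choose, hj.1⟩ hj.2]
        exact ConcreteCategory.congr_hom ((s.ι.app ⟨(hcover m x hx).choose, hj.1⟩).naturality f) ⟨x, hj.2⟩ }
  fac s j := by
    apply NatTrans.ext
    funext m
    ext σ
    obtain ⟨x, hx⟩ := σ
    exact chainDescApp_eq X hX i hcover s m ⟨x, hX j.2.le m hx⟩ j hx
  uniq s mφ hm := by
    apply NatTrans.ext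
    funext m
    ext σ
    obtain ⟨x, hx⟩ := σ
    have hj : (hcover m x hx).choose < i ∧ x ∈ (X (hcover m x hx).choose).carrier m :=
      (hcover m x hx).choose_spec
    have h0 : (⟨x, hx⟩ : (X i).toSSet.obj m)
        = ((restrictionCocone (subChain X hX) i).ι.app ⟨(hcover m x hx).choose, hj.1⟩).app
          m ⟨x, hj.2⟩ := rfl
    rw [h0]
    have h1 := ConcreteCategory.congr_hom (NatTrans.congr_app (hm ⟨(hcover m x hx).choose, hj.1⟩) m) ⟨x, hj.2⟩
    refine h1.trans ?_
    exact (chainDescApp_eq X hX i hcover s m ⟨x, hx⟩ ⟨(hcover m x hx).choose, hj.1⟩ hj.2).symm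

end Chains

section IsoMem

/-- Saturated classes contain all isomorphisms. -/
lemma IsSaturated.iso_mem {T : MorphismProperty SSet.{0}} (hT : IsSaturated T)
    {X X' : SSet.{0}} (f : X ⟶ X') [IsIso f] : T f := by
  classical
  haveI : WellFoundedLT Unit :=
    ⟨⟨fun a => ⟨a, fun b h => absurd (Subsingleton.elim b a ▸ h) (lt_irrefl a)⟩⟩⟩
  letI : SuccOrder Unit := SuccOrder.ofLinearWellFoundedLT Unit
  let F : Unit ⥤ SSet.{0} := (Functor.const Unit).obj X
  let c : Cocone F :=
    { pt := X'
      ι := { app := fun _ => f, naturality := fun i j g => by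
              show 𝟙 X ≫ f = f ≫ 𝟙 X'
              simp } }
  have hc : IsColimit c :=
    { desc := fun s => inv f ≫ s.ι.app Unit.unit
      fac := fun s j => by
        show f ≫ inv f ≫ s.ι.app Unit.unit = s.ι.app j
        rw [IsIso.hom_inv_id_assoc]
      uniq := fun s mφ hmφ => by
        show mφ = inv f ≫ s.ι.app Unit.unit
        rw [← hmφ Unit.unit]
        have h2 : c.ι.app Unit.unit = f := rfl
        rw [h2, IsIso.inv_hom_id_assoc] }
  have := hT.stableUnderTransfiniteComposition Unit F
    (fun i hi => absurd (fun b _ => le_of_eq (Subsingleton.elim b i)) hi)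
    (fun i hi => absurd (fun b _ => le_of_eq (Subsingleton.elim b i)) hi.not_isMin)
    c hc
  exact this

end IsoMem


section Step

variable (Y : SSet.{0}) (A : Sub Y) (ν μ : Set (Y.obj V0)) (v : Y.obj V0)

/-- The vertex `(0, v)` of the widening `W_μ(Y)`. -/
def wv : (wideSub Y μ).toSSet.obj V0 :=
  ⟨((fun _ => false), v), by
    erw [mem_wideSub_iff]
    intro i hi
    exact absurd hi (by simp)⟩

lemma wv_vert {m : SimplexCategoryᵒᵖ} (x2 : (wideSub Y μ).toSSet.obj m)
    (i : Fin (m.unop.len + 1)) (h : (wideSub Y μ).toSSet.map (vtx i) x2 = wv Y μ v) :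
    x2.1.1 i = false ∧ Y.map (vtx i) x2.1.2 = v :=
  ⟨congrArg (fun q => q.1.1 0) h, congrArg (fun q => q.1.2) h⟩

lemma wv_vert' {m : SimplexCategoryᵒᵖ} (x2 : (wideSub Y μ).toSSet.obj m)
    (i : Fin (m.unop.len + 1)) (h1 : x2.1.1 i = false) (h2 : Y.map (vtx i) x2.1.2 = v) :
    (wideSub Y μ).toSSet.map (vtx i) x2 = wv Y μ v := by
  apply Subtype.ext
  exact Prod.ext (funext fun _ => h1) h2

/-- The subcomplex of `W_μ(Y)` along which the cell is attached. -/
def BSub : Sub (wideSub Y μ).toSSet :=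
  (wideSub Y μ).restrict ((wideSub Y (ν ∩ A.carrier V0)).inter A.prodJ)

lemma wv_narrow (hnarv : Narrow Y v) : Narrow (wideSub Y μ).toSSet (wv Y μ v) := by
  intro m τ g g' h h'
  exact hnarv τ.1.2 g g' (congrArg (fun q => q.1.2) h) (congrArg (fun q => q.1.2) h')

/-- The "or" function gluing the two `J`-coordinates. -/
def orFun (m : SimplexCategoryᵒᵖ) (x : (sprod J (wideSub Y μ).toSSet).obj m) :
    (sprod J Y).obj m :=
  ((fun i => x.1 i || x.2.1.1 i), x.2.1.2)

open Classical in
/-- First component of the splitting function. -/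
noncomputable def splitA (m : SimplexCategoryᵒᵖ) (p : (sprod J Y).obj m) : J.obj m :=
  fun i => if Y.map (vtx i) p.2 = v then p.1 i else false

open Classical in
/-- Second component of the splitting function. -/
noncomputable def splitB (m : SimplexCategoryᵒᵖ) (p : (sprod J Y).obj m) : J.obj m :=
  fun i => if Y.map (vtx i) p.2 = v then false else p.1 i

lemma or_split (m : SimplexCategoryᵒᵖ) (p : (sprod J Y).obj m) (i : Fin (m.unop.len + 1)) :
    (splitA Y v m p i || splitB Y v m p i) = p.1 i := by
  by_cases h : Y.map (vtx i) p.2 = v <;> simp [splitA, splitB, h]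

lemma splitA_or (m : SimplexCategoryᵒᵖ) (x : (sprod J (wideSub Y μ).toSSet).obj m)
    (hvμ : v ∉ μ) (hx : x ∈ (wideSub (wideSub Y μ).toSSet {wv Y μ v}).carrier m) :
    splitA Y v m (orFun Y μ m x) = x.1 ∧ splitB Y v m (orFun Y μ m x) = x.2.1.1 := by
  classical
  rw [mem_wideSub_iff] at hx
  have hb : ∀ i, x.2.1.1 i = true → Y.map (vtx i) x.2.1.2 ∈ μ := by
    have h2 := x.2.2
    rw [mem_wideSub_iff] at h2
    exact h2
  constructor <;> funext i <;>
    [show (if Y.map (vtx i) x.2.1.2 = v then x.1 i || x.2.1.1 i else false) = x.1 i;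
     show (if Y.map (vtx i) x.2.1.2 = v then false else x.1 i || x.2.1.1 i) = x.2.1.1 i] <;>
  · by_cases hv' : Y.map (vtx i) x.2.1.2 = v
    · rw [if_pos hv']
      by_cases ha : x.1 i = true
      · have := (wv_vert Y μ v x.2 i (hx i ha)).1
        simp [ha, this]
      · have hbf : x.2.1.1 i = false := by
          cases hB : x.2.1.1 i
          · rfl
          · exact absurd (hv' ▸ hb i hB) hvμ
        simp [(Bool.not_eq_true _).mp ha, hbf]
    · rw [if_neg hv']
      have haf : x.1 i = false := by
        cases hA : x.1 i
        · rfl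
        · exact absurd (wv_vert Y μ v x.2 i (hx i hA)).2 hv'
      simp [haf]

lemma split_mem_wideμ (m : SimplexCategoryᵒᵖ) (p : (sprod J Y).obj m)
    (hp : p ∈ (wideSub Y (μ ∪ {v})).carrier m) :
    (splitB Y v m p, p.2) ∈ (wideSub Y μ).carrier m := by
  classical
  erw [mem_wideSub_iff] at hp ⊢
  intro i hi
  show Y.map (vtx i) p.2 ∈ μ
  by_cases hv' : Y.map (vtx i) p.2 = v
  · exact absurd hi (by simp [splitB, hv'])
  · have hc : p.1 i = true := by
      have : splitB Y v m p i = p.1 i := by simp [splitB, hv']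
      rw [← this]; exact hi
    rcases hp i hc with h | h
    · exact h
    · exact absurd h hv'

lemma split_mem_cod (m : SimplexCategoryᵒᵖ) (p : (sprod J Y).obj m)
    (hp : p ∈ (wideSub Y (μ ∪ {v})).carrier m) :
    ((splitA Y v m p : J.obj m),
      (⟨(splitB Y v m p, p.2), split_mem_wideμ Y μ v m p hp⟩ : (wideSub Y μ).toSSet.obj m))
      ∈ (wideSub (wideSub Y μ).toSSet {wv Y μ v}).carrier m := by
  classical
  erw [mem_wideSub_iff]
  intro i hi
  have hv' : Y.map (vtx i) p.2 = v := by
    by_contra hv'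
    exact absurd hi (by simp [splitA, hv'])
  show (wideSub Y μ).toSSet.map (vtx i) _ = wv Y μ v
  apply wv_vert'
  · show splitB Y v m p i = false
    simp [splitB, hv']
  · exact hv'

lemma or_mem_wideμ' (m : SimplexCategoryᵒᵖ) (x : (sprod J (wideSub Y μ).toSSet).obj m)
    (hx : x ∈ (wideSub (wideSub Y μ).toSSet {wv Y μ v}).carrier m) :
    orFun Y μ m x ∈ (wideSub Y (μ ∪ {v})).carrier m := by
  rw [mem_wideSub_iff] at hx ⊢
  intro i hi
  show Y.map (vtx i) x.2.1.2 ∈ μ ∪ {v}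
  rcases Bool.or_eq_true_iff.mp hi with ha | hb
  · exact Or.inr ((wv_vert Y μ v x.2 i (hx i ha)).2)
  · have h2 := x.2.2
    rw [mem_wideSub_iff] at h2
    exact Or.inl (h2 i hb)


/-- The gluing morphism on the big cell. -/
def orHom : (wideSub (wideSub Y μ).toSSet {wv Y μ v}).toSSet ⟶ (wideSub Y (μ ∪ {v})).toSSet where
  app m := TypeCat.ofHom fun x => ⟨orFun Y μ m x.1, or_mem_wideμ' Y μ v m x.1 x.2⟩
  naturality m m' f := rfl

open Classical in
/-- The splitting morphism on the big cell. -/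
noncomputable def splitHom :
    (wideSub Y (μ ∪ {v})).toSSet ⟶ (wideSub (wideSub Y μ).toSSet {wv Y μ v}).toSSet where
  app m := TypeCat.ofHom fun x => ⟨(splitA Y v m x.1, ⟨(splitB Y v m x.1, x.1.2), split_mem_wideμ Y μ v m x.1 x.2⟩),
    split_mem_cod Y μ v m x.1 x.2⟩
  naturality m m' f := by
    ext x
    apply Subtype.ext
    apply Prod.ext
    · funext i
      show (if Y.map (vtx i) (Y.map f x.1.2) = v then x.1.1 (f.unop.toOrderHom i) else false)
        = (if Y.map (vtx (f.unop.toOrderHom i)) x.1.2 = v then x.1.1 (f.unop.toOrderHom i)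
            else false)
      rw [vtx_comp]
    · apply Subtype.ext
      apply Prod.ext
      · funext i
        show (if Y.map (vtx i) (Y.map f x.1.2) = v then false else x.1.1 (f.unop.toOrderHom i))
          = (if Y.map (vtx (f.unop.toOrderHom i)) x.1.2 = v then false
              else x.1.1 (f.unop.toOrderHom i))
        rw [vtx_comp]
      · rfl

lemma or_mem_dom (hv : v ∈ ν) (m : SimplexCategoryᵒᵖ)
    (x : (sprod J (wideSub Y μ).toSSet).obj m)
    (hx : x ∈ (widenedSub (wideSub Y μ).toSSet (BSub Y A ν μ) {wv Y μ v}).carrier m) :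
    orFun Y μ m x ∈ ((widenedSub Y A ν).union (wideSub Y μ)).carrier m := by
  rcases hx with hz | ⟨hw, hBp⟩
  · right
    rw [mem_wideSub_iff]
    intro i hi
    rw [mem_zeroSlice_iff] at hz
    have hb : x.2.1.1 i = true := by
      cases hbv : x.2.1.1 i
      · exfalso
        have hi' : (x.1 i || x.2.1.1 i) = true := hi
        rw [hz i, hbv] at hi'
        exact absurd hi' (by simp)
      · rfl
    have h2 := x.2.2
    rw [mem_wideSub_iff] at h2
    exact h2 i hb
  · obtain ⟨hwB, hAB⟩ := hBp
    left
    right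
    constructor
    · rw [mem_wideSub_iff]
      intro i hi
      show Y.map (vtx i) x.2.1.2 ∈ ν ∩ A.carrier V0
      rcases Bool.or_eq_true_iff.mp hi with ha | hb
      · rw [mem_wideSub_iff] at hw
        obtain ⟨hwv, hB0⟩ := hw i ha
        have hvert := (wv_vert Y μ v x.2 i hwv).2
        rw [hvert]
        refine ⟨hv, ?_⟩
        rw [hwv] at hB0
        exact hB0.2
      · rw [mem_wideSub_iff] at hwB
        exact hwB i hb
    · exact hAB

lemma split_mem_dom (hμν : μ ⊆ ν) (hvμ : v ∉ μ) (m : SimplexCategoryᵒᵖ)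
    (p : (sprod J Y).obj m)
    (hp1 : p ∈ ((widenedSub Y A ν).union (wideSub Y μ)).carrier m)
    (hp2 : p ∈ (wideSub Y (μ ∪ {v})).carrier m) :
    ((splitA Y v m p : J.obj m),
      (⟨(splitB Y v m p, p.2), split_mem_wideμ Y μ v m p hp2⟩ : (wideSub Y μ).toSSet.obj m))
      ∈ (widenedSub (wideSub Y μ).toSSet (BSub Y A ν μ) {wv Y μ v}).carrier m := by
  classical
  rcases hp1 with hbase | hwμ
  · rcases hbase with hz | ⟨hwν, hA⟩
    · left
      erw [mem_zeroSlice_iff] at hz ⊢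
      intro i
      show (if Y.map (vtx i) p.2 = v then p.1 i else false) = false
      by_cases hv' : Y.map (vtx i) p.2 = v
      · rw [if_pos hv', hz i]
      · rw [if_neg hv']
    · right
      rw [mem_wideSub_iff] at hwν
      constructor
      · erw [mem_wideSub_iff]
        intro i hi
        have hv' : Y.map (vtx i) p.2 = v := by
          by_contra hv'
          exact absurd hi (by simp [splitA, hv'])
        have hc : p.1 i = true := by
          have : splitA Y v m p i = p.1 i := by simp [splitA, hv']
          rw [← this]; exact hi
        have hwv : (wideSub Y μ).toSSet.map (vtx i)
            (⟨(splitB Y v m p, p.2), split_mem_wideμ Y μ v m p hp2⟩ :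
              (wideSub Y μ).toSSet.obj m) = wv Y μ v := by
          apply wv_vert'
          · show splitB Y v m p i = false
            simp [splitB, hv']
          · exact hv'
        have hgoal : wv Y μ v ∈ (BSub Y A ν μ).carrier V0 := by
          show (wv Y μ v).1 ∈ ((wideSub Y (ν ∩ A.carrier V0)).inter A.prodJ).carrier V0
          constructor
          · rw [mem_wideSub_iff]
            intro j hj
            exact absurd hj (by simp [wv])
          · show v ∈ A.carrier V0
            have := hwν i hc
            rw [hv'] at this
            exact this.2
        refine ⟨hwv, ?_⟩
        show (wideSub Y μ).toSSet.map (vtx i)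
            (⟨(splitB Y v m p, p.2), split_mem_wideμ Y μ v m p hp2⟩ :
              (wideSub Y μ).toSSet.obj m) ∈ (BSub Y A ν μ).carrier V0
        rw [hwv]
        exact hgoal
      · show ((splitB Y v m p : J.obj m), p.2)
          ∈ ((wideSub Y (ν ∩ A.carrier V0)).inter A.prodJ).carrier m
        constructor
        · erw [mem_wideSub_iff]
          intro i hi
          by_cases hv' : Y.map (vtx i) p.2 = v
          · exact absurd hi (by simp [splitB, hv'])
          · have hc : p.1 i = true := by
              have : splitB Y v m p i = p.1 i := by simp [splitB, hv']
              rw [← this]; exact hi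
            exact hwν i hc
        · exact hA
  · left
    erw [mem_zeroSlice_iff]
    intro i
    rw [mem_wideSub_iff] at hwμ
    show (if Y.map (vtx i) p.2 = v then p.1 i else false) = false
    by_cases hv' : Y.map (vtx i) p.2 = v
    · rw [if_pos hv']
      cases hc : p.1 i
      · rfl
      · exact absurd (hv' ▸ hwμ i hc) hvμ
    · rw [if_neg hv']

/-- The gluing morphism on the attaching cell. -/
def domOrHom (hv : v ∈ ν) :
    (widenedSub (wideSub Y μ).toSSet (BSub Y A ν μ) {wv Y μ v}).toSSet ⟶
      ((((widenedSub Y A ν).union (wideSub Y μ)).inter (wideSub Y (μ ∪ {v})))).toSSet :=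
  { app := fun m => TypeCat.ofHom fun x => ⟨orFun Y μ m x.1, or_mem_dom Y A ν μ v hv m x.1 x.2,
      or_mem_wideμ' Y μ v m x.1
        (widenedSub_le (wideSub Y μ).toSSet (BSub Y A ν μ) {wv Y μ v} m x.2)⟩
    naturality := fun m m' f => rfl }

open Classical in
/-- The splitting morphism on the attaching cell. -/
noncomputable def domSplitHom (hμν : μ ⊆ ν) (hvμ : v ∉ μ) :
    ((((widenedSub Y A ν).union (wideSub Y μ)).inter (wideSub Y (μ ∪ {v})))).toSSet ⟶
      (widenedSub (wideSub Y μ).toSSet (BSub Y A ν μ) {wv Y μ v}).toSSet where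
  app m := TypeCat.ofHom fun x => ⟨(splitA Y v m x.1, ⟨(splitB Y v m x.1, x.1.2),
      split_mem_wideμ Y μ v m x.1 x.2.2⟩),
    split_mem_dom Y A ν μ v hμν hvμ m x.1 x.2.1 x.2.2⟩
  naturality m m' f := by
    ext x
    apply Subtype.ext
    apply Prod.ext
    · funext i
      show (if Y.map (vtx i) (Y.map f x.1.2) = v then x.1.1 (f.unop.toOrderHom i) else false)
        = (if Y.map (vtx (f.unop.toOrderHom i)) x.1.2 = v then x.1.1 (f.unop.toOrderHom i)
            else false)
      rw [vtx_comp]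
    · apply Subtype.ext
      apply Prod.ext
      · funext i
        show (if Y.map (vtx i) (Y.map f x.1.2) = v then false else x.1.1 (f.unop.toOrderHom i))
          = (if Y.map (vtx (f.unop.toOrderHom i)) x.1.2 = v then false
              else x.1.1 (f.unop.toOrderHom i))
        rw [vtx_comp]
      · rfl

/-- The codomain identification. -/
noncomputable def codIso (hvμ : v ∉ μ) :
    (wideSub Y (μ ∪ {v})).toSSet ≅ (wideSub (wideSub Y μ).toSSet {wv Y μ v}).toSSet where
  hom := splitHom Y μ v
  inv := orHom Y μ v
  hom_inv_id := by
    apply NatTrans.ext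
    funext m
    ext x
    apply Subtype.ext
    apply Prod.ext
    · funext i
      exact or_split Y v m x.1 i
    · rfl
  inv_hom_id := by
    apply NatTrans.ext
    funext m
    ext x
    apply Subtype.ext
    apply Prod.ext
    · exact (splitA_or Y μ v m x.1 hvμ x.2).1
    · apply Subtype.ext
      apply Prod.ext
      · exact (splitA_or Y μ v m x.1 hvμ x.2).2
      · rfl

/-- The domain identification. -/
noncomputable def domIso (hμν : μ ⊆ ν) (hv : v ∈ ν) (hvμ : v ∉ μ) :
    ((((widenedSub Y A ν).union (wideSub Y μ)).inter (wideSub Y (μ ∪ {v})))).toSSet ≅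
      (widenedSub (wideSub Y μ).toSSet (BSub Y A ν μ) {wv Y μ v}).toSSet where
  hom := domSplitHom Y A ν μ v hμν hvμ
  inv := domOrHom Y A ν μ v hv
  hom_inv_id := by
    apply NatTrans.ext
    funext m
    ext x
    apply Subtype.ext
    apply Prod.ext
    · funext i
      exact or_split Y v m x.1 i
    · rfl
  inv_hom_id := by
    apply NatTrans.ext
    funext m
    ext x
    have hcod := widenedSub_le (wideSub Y μ).toSSet (BSub Y A ν μ) {wv Y μ v} m x.2
    apply Subtype.ext
    apply Prod.ext
    · exact (splitA_or Y μ v m x.1 hvμ hcod).1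
    · apply Subtype.ext
      apply Prod.ext
      · exact (splitA_or Y μ v m x.1 hvμ hcod).2
      · rfl

/-- The step inclusion belongs to any saturated class containing `WideNar1`. -/
lemma step_mem {T : MorphismProperty SSet.{0}} (hT : IsSaturated T) (hW1 : WideNar1 ≤ T)
    (hnarv : Narrow Y v) (hμν : μ ⊆ ν) (hv : v ∈ ν) (hvμ : v ∉ μ)
    {μ' : Set (Y.obj V0)} (hμ' : μ' = μ ∪ {v})
    (h : (((widenedSub Y A ν)).union (wideSub Y μ)).Le
      ((widenedSub Y A ν).union (wideSub Y μ'))) :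
    T (Sub.homOfLe h) := by
  subst hμ'
  haveI := hT.respectsIso
  set S := (widenedSub Y A ν).union (wideSub Y μ) with hSdef
  set Tc := wideSub Y (μ ∪ {v}) with hTcdef
  set X' := (widenedSub Y A ν).union (wideSub Y (μ ∪ {v})) with hX'def
  have hUle : (S.union Tc).Le X' := by
    intro m σ hσ
    rcases hσ with hσ | hσ
    · rcases hσ with hσ | hσ
      · exact Or.inl hσ
      · exact Or.inr (wideSub_mono Y Set.subset_union_left m hσ)
    · exact Or.inr hσ
  have hUge : X'.Le (S.union Tc) := by
    intro m σ hσ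
    rcases hσ with hσ | hσ
    · exact Or.inl (Or.inl hσ)
    · exact Or.inr hσ
  have hpo := union_isPushout S Tc
  have sq := hpo.of_iso (domIso Y A ν μ v hμν hv hvμ) (Iso.refl S.toSSet) (codIso Y μ v hvμ)
    (Sub.isoOfLe hUle hUge)
    (f' := (domIso Y A ν μ v hμν hv hvμ).inv ≫ Sub.homOfLe (Sub.inter_le_left S Tc))
    (g' := widenedIncl (wideSub Y μ).toSSet (BSub Y A ν μ) {wv Y μ v})
    (inl' := Sub.homOfLe h)
    (inr' := (codIso Y μ v hvμ).inv ≫ Sub.homOfLe (Sub.right_le_union S Tc) ≫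
      (Sub.isoOfLe hUle hUge).hom)
    (by simp) ?_ ?_ (by simp)
  · exact MorphismProperty.IsStableUnderCobaseChange.of_isPushout
      (self := hT.stableUnderCobaseChange) sq
      (hW1 _ ⟨(wideSub Y μ).toSSet, BSub Y A ν μ, wv Y μ v, wv_narrow Y μ v hnarv, rfl⟩)
  · -- commg
    apply NatTrans.ext
    funext m
    ext x
    apply Subtype.ext
    rfl
  · -- comminl
    apply NatTrans.ext
    funext m
    ext x
    apply Subtype.ext
    rfl

end Step




section Main

lemma widened_mem {T : MorphismProperty SSet.{0}} (hT : IsSaturated T) (hW1 : WideNar1 ≤ T)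
    (Y : SSet.{0}) (A : Sub Y) (ν : Set (Y.obj V0)) (hnar : ∀ v ∈ ν, Narrow Y v) :
    T (widenedIncl Y A ν) := by
  classical
  haveI := hT.respectsIso
  letI : LinearOrder ↥ν := linearOrderOfSTO WellOrderingRel
  haveI : WellFoundedLT ↥ν := WellOrderingRel.isWellOrder.toIsWellFounded
  let ι : Type := WithTop (WithBot ↥ν)
  letI : SuccOrder ι := SuccOrder.ofLinearWellFoundedLT ι
  let el : ↥ν → ι := fun u => ((u : WithBot ↥ν) : ι)
  let μs : ι → Set (Y.obj V0) := fun i => {w | ∃ hw : w ∈ ν, el ⟨w, hw⟩ < i}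
  let Xf : ι → Sub (sprod J Y) := fun i => (widenedSub Y A ν).union (wideSub Y (μs i))
  have hmono : ∀ ⦃i j : ι⦄, i ≤ j → (Xf i).Le (Xf j) := by
    intro i j hij m σ hσ
    rcases hσ with hσ | hσ
    · exact Or.inl hσ
    · refine Or.inr (wideSub_mono Y ?_ m hσ)
      rintro w ⟨hw, hlt⟩
      exact ⟨hw, hlt.trans_le hij⟩
  let F := subChain Xf hmono
  have hsucc : ∀ i : ι, ¬IsMax i → T (F.map (homOfLE (Order.le_succ i))) := by
    intro i hi
    obtain _ | (_ | u) := i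
    · exact absurd isMax_top hi
    · -- i = ↑⊥ : nothing is added
      have hrev : (Xf (Order.succ (((⊥ : WithBot ↥ν) : ι)))).Le
          (Xf (((⊥ : WithBot ↥ν) : ι))) := by
        intro m σ hσ
        rcases hσ with hσ | hσ
        · exact Or.inl hσ
        · refine Or.inr (wideSub_mono Y ?_ m hσ)
          rintro w ⟨hw, hlt⟩
          have hlt' := (Order.lt_succ_iff_of_not_isMax hi).mp hlt
          exact absurd (WithTop.coe_le_coe.mp hlt') (WithBot.not_coe_le_bot _)
      exact @IsSaturated.iso_mem T hT _ _
        (F.map (homOfLE (Order.le_succ (((⊥ : WithBot ↥ν) : ι)))))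
        (Sub.isIso_homOfLe (hmono (Order.le_succ (((⊥ : WithBot ↥ν) : ι)))) hrev)
    · -- i = ↑↑u : the step adding the vertex u
      refine step_mem Y A ν (μs (el u)) u.1 hT hW1 (hnar u.1 u.2)
        (fun w hw => hw.choose) u.2 ?_ ?_ (hmono (Order.le_succ (el u)))
      · rintro ⟨hw, hlt⟩
        exact lt_irrefl _ hlt
      · ext w
        constructor
        · rintro ⟨hw, hlt⟩
          have hlt2 := (Order.lt_succ_iff_of_not_isMax hi).mp hlt
          rcases lt_or_eq_of_le hlt2 with hlt | heq
          · exact Or.inl ⟨hw, hlt⟩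
          · right
            have h1 : ((⟨w, hw⟩ : ↥ν) : WithBot ↥ν) = (u : WithBot ↥ν) :=
              WithTop.coe_inj.mp heq
            have h2 : (⟨w, hw⟩ : ↥ν) = u := WithBot.coe_inj.mp h1
            exact congrArg Subtype.val h2
        · rintro (⟨hw, hlt⟩ | hw)
          · exact ⟨hw, hlt.trans (Order.lt_succ_of_not_isMax hi)⟩
          · have hw' : w = u.1 := hw
            subst hw'
            exact ⟨u.2, Order.lt_succ_of_not_isMax hi⟩
  have hlim : ∀ i : ι, Order.IsSuccLimit i → Nonempty (IsColimit (restrictionCocone F i)) := by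
    intro i hi
    refine ⟨restrictionIsColimit Xf hmono i ?_⟩
    intro m σ hσ
    obtain ⟨j0, hj0⟩ := not_isMin_iff.mp hi.not_isMin
    rcases hσ with hσ | hσ
    · exact ⟨j0, hj0, Or.inl hσ⟩
    · rw [mem_wideSub_iff] at hσ
      have hboti : (⊥ : ι) < i :=
        bot_le.lt_of_ne (fun hbot => hi.not_isMin (hbot ▸ isMin_bot))
      let jf : Fin (m.unop.len + 1) → ι := fun p =>
        if h : σ.1 p = true then Order.succ (el ⟨Y.map (vtx p) σ.2, (hσ p h).choose⟩) else ⊥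
      have hjf_lt : ∀ p, jf p < i := by
        intro p
        by_cases h : σ.1 p = true
        · simp only [jf, dif_pos h]
          exact (Order.isSuccPrelimit_iff_succ_lt.mp hi.isSuccPrelimit) _
            (hσ p h).choose_spec
        · simp only [jf, dif_neg h]
          exact hboti
      refine ⟨Finset.univ.sup jf, ?_, Or.inr ?_⟩
      · rw [Finset.sup_lt_iff hboti]
        intro p _
        exact hjf_lt p
      · rw [mem_wideSub_iff]
        intro p hp
        refine ⟨(hσ p hp).choose, ?_⟩
        have h1 : el ⟨Y.map (vtx p) σ.2, (hσ p hp).choose⟩ < jf p := by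
          simp only [jf, dif_pos hp]
          exact Order.lt_succ_of_not_isMax (hσ p hp).choose_spec.not_isMax
        exact lt_of_lt_of_le h1 (Finset.le_sup (Finset.mem_univ p))
  have hle : ∀ i, (Xf i).Le (wideSub Y ν) := by
    intro i m σ hσ
    rcases hσ with hσ | hσ
    · exact widenedSub_le Y A ν m hσ
    · exact wideSub_mono Y (fun w hw => hw.choose) m hσ
  have htop : (wideSub Y ν).Le (Xf ⊤) := by
    intro m σ hσ
    refine Or.inr (wideSub_mono Y ?_ m hσ)
    intro w hw
    exact ⟨hw, WithTop.coe_lt_top _⟩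
  have hcolim := subChainCoconeIsColimit Xf hmono (wideSub Y ν) hle ⊤ (fun i => le_top) htop
  have hmem := hT.stableUnderTransfiniteComposition ι F hsucc hlim
    (subChainCocone Xf hmono (wideSub Y ν) hle) hcolim
  have hba : (widenedSub Y A ν).Le (Xf ⊥) := fun m σ hσ => Or.inl hσ
  have hab : (Xf ⊥).Le (widenedSub Y A ν) := by
    intro m σ hσ
    rcases hσ with hσ | hσ
    · exact hσ
    · left
      rw [mem_zeroSlice_iff]
      intro p
      rw [mem_wideSub_iff] at hσ
      cases hp : σ.1 p
      · rfl
      · obtain ⟨hw, hlt⟩ := hσ p hp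
        exact absurd (WithTop.coe_lt_coe.mp hlt) not_lt_bot
  have harrow : Arrow.mk ((subChainCocone Xf hmono (wideSub Y ν) hle).ι.app ⊥) ≅
      Arrow.mk (widenedIncl Y A ν) := by
    refine Arrow.isoMk (Sub.isoOfLe hab hba) (Iso.refl _) ?_
    apply NatTrans.ext
    funext m
    ext σ
    rfl
  exact (T.arrow_mk_iso_iff harrow).mp hmem

end Main

/-- The class `Wide_nar` of inclusions widened at a narrow set of
vertices is contained in the saturated closure of the class `Wide_nar^(1)` of inclusions
widened at a single narrow vertex. -/
theorem WideNar_le_satClosure_WideNar1 : WideNar ≤ satClosure WideNar1 := by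
  intro X X' f hf T hT hle
  obtain ⟨Y, A, ν, hnar, harr⟩ := hf
  haveI := hT.respectsIso
  exact (T.arrow_mk_iso_iff (eqToIso harr)).mpr (widened_mem hT hle Y A ν hnar)

end Paper
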